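/- Let 𝓓 be a family of subsets of a set Ω such that the class of indicator functions 𝓕 = {𝟙_D : D ∈ 𝓓} has VC dimension d ≥ 1. Then the class 𝓕̃ = {𝟙_{D ∪ D'} : D, D' ∈ 𝓓} of indicators of unions of two members of 𝓓 satisfies VC(𝓕̃) < 10·d. -/
import Mathlib


open MeasureTheory ProbabilityTheory Real Set
open scoped BigOperators ENNReal

noncomputable section

/-- A class `F` of real-valued functions shatters a finite set `S` if every subset `T ⊆ S`
can be picked out: some `f ∈ F` equals `1` exactly on `T` (within `S`). -/
def ShattersF {E : Type*} (F : Set (E → ℝ)) (S : Finset E) : Prop :=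
  ∀ T ⊆ S, ∃ f ∈ F, ∀ x ∈ S, (f x = 1 ↔ x ∈ T)

/-- The VC dimension of a class of functions: the supremum (in `ℕ∞`) of the cardinalities of
finite shattered sets. -/
def vcDim {E : Type*} (F : Set (E → ℝ)) : ℕ∞ :=
  ⨆ (S : Finset E) (_ : ShattersF F S), (S.card : ℕ∞)


namespace Stmt7Aux
open Finset

/-- `phiF d n = ∑_{i=0}^{d} C(n,i)` (Sauer–Shelah bound). -/
def phiF (d n : ℕ) : ℕ := ∑ i ∈ Finset.range (d + 1), n.choose i

lemma nine_mul_choose_le {n k d : ℕ} (hn : 10 * d ≤ n) (hk : k < d) :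
    9 * n.choose k ≤ n.choose (k + 1) := by
  have h1 : n.choose (k+1) * (k+1) = n.choose k * (n - k) := Nat.choose_succ_right_eq n k
  have h2 : 9 * (k + 1) ≤ n - k := by omega
  have : 9 * n.choose k * (k+1) ≤ n.choose (k+1) * (k+1) := by
    rw [h1]; calc 9 * n.choose k * (k+1) = n.choose k * (9 * (k+1)) := by ring
    _ ≤ n.choose k * (n - k) := Nat.mul_le_mul_left _ h2
  exact Nat.le_of_mul_le_mul_right this (by omega)

lemma pow_nine_choose_le {d k : ℕ} (hk : k ≤ d) :
    9 ^ k * (10 * d).choose (d - k) ≤ (10 * d).choose d := by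
  induction k with
  | zero => simp
  | succ k ih =>
    have h9 : 9 * (10*d).choose (d - (k+1)) ≤ (10*d).choose (d - k) := by
      have := nine_mul_choose_le (n := 10*d) (k := d - (k+1)) (d := d) le_rfl (by omega)
      rwa [show d - (k+1) + 1 = d - k by omega] at this
    calc 9 ^ (k+1) * (10*d).choose (d - (k+1))
        = 9 ^ k * (9 * (10*d).choose (d - (k+1))) := by ring
      _ ≤ 9 ^ k * (10*d).choose (d - k) := Nat.mul_le_mul_left _ h9
      _ ≤ (10*d).choose d := ih (by omega)

lemma ratio_lemma (d : ℕ) :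
    9 ^ 9 * (10 * (d+1)).choose (d+1) ≤ 10 ^ 10 * (10 * d).choose d := by
  have hv : (10 * (d+1)).choose (d+1)
      = ∑ j ∈ range (d + 2), Nat.choose 10 j * (10 * d).choose (d + 1 - j) := by
    rw [show 10 * (d+1) = 10 + 10 * d by ring, Nat.add_choose_eq,
      Finset.Nat.sum_antidiagonal_eq_sum_range_succ_mk]
  rw [hv, Finset.mul_sum]
  calc ∑ j ∈ range (d+2), 9 ^ 9 * (Nat.choose 10 j * (10 * d).choose (d + 1 - j))
      ≤ ∑ j ∈ range (d+2), 9 ^ (10 - j) * Nat.choose 10 j * (10 * d).choose d := by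
        apply Finset.sum_le_sum
        intro j hj
        rcases Nat.eq_zero_or_pos j with h0 | h1
        · subst h0
          simp only [Nat.choose_zero_right, one_mul, Nat.sub_zero, mul_one]
          -- 9^9 * choose (d+1) ≤ 9^10 * choose d
          have h1 : (10*d).choose (d+1) * (d+1) = (10*d).choose d * (10*d - d) :=
            Nat.choose_succ_right_eq _ _
          have h2 : (10*d).choose (d+1) ≤ 9 * (10*d).choose d := by
            have h3 : (10*d).choose (d+1) * (d+1) ≤ (9 * (10*d).choose d) * (d+1) := by
              rw [h1]
              calc (10*d).choose d * (10*d - d) ≤ (10*d).choose d * (9*(d+1)) :=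
                    Nat.mul_le_mul_left _ (by omega)
                _ = 9 * (10*d).choose d * (d+1) := by ring
            exact Nat.le_of_mul_le_mul_right h3 (by omega)
          calc 9^9 * (10*d).choose (d+1) ≤ 9^9 * (9 * (10*d).choose d) :=
                Nat.mul_le_mul_left _ h2
            _ = 9 ^ (10 - 0) * 1 * (10*d).choose d := by norm_num; ring
        · by_cases hj10 : j ≤ 10
          · have hjd : j ≤ d + 1 := by simp [Finset.mem_range] at hj; omega
            have key : 9 ^ (j-1) * (10*d).choose (d + 1 - j) ≤ (10*d).choose d := by
              have := pow_nine_choose_le (d := d) (k := j - 1) (by omega)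
              rwa [show d - (j-1) = d + 1 - j by omega] at this
            have h99 : (9:ℕ)^9 = 9 ^ (10 - j) * 9 ^ (j - 1) := by
              rw [← pow_add]; congr 1; omega
            calc 9^9 * (Nat.choose 10 j * (10*d).choose (d+1-j))
                = 9 ^ (10-j) * Nat.choose 10 j * (9 ^ (j-1) * (10*d).choose (d+1-j)) := by
                  rw [h99]; ring
              _ ≤ 9 ^ (10-j) * Nat.choose 10 j * (10*d).choose d :=
                  Nat.mul_le_mul_left _ key
          · have : Nat.choose 10 j = 0 := Nat.choose_eq_zero_of_lt (by omega)
            simp [this]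
    _ = (∑ j ∈ range (d+2), 9 ^ (10 - j) * Nat.choose 10 j) * (10 * d).choose d := by
        rw [Finset.sum_mul]
    _ ≤ 10 ^ 10 * (10 * d).choose d := by
        apply Nat.mul_le_mul_right
        have hsub : ∑ j ∈ range (d+2), 9 ^ (10 - j) * Nat.choose 10 j
            ≤ ∑ j ∈ range (d+12), 9 ^ (10 - j) * Nat.choose 10 j :=
          Finset.sum_le_sum_of_subset (Finset.range_subset_range.2 (by omega))
        have heq : ∑ j ∈ range (d+12), 9 ^ (10 - j) * Nat.choose 10 j
            = ∑ j ∈ range 11, 9 ^ (10 - j) * Nat.choose 10 j := by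
          symm
          apply Finset.sum_subset (Finset.range_subset_range.2 (by omega))
          intro x _ hx
          simp only [Finset.mem_range] at hx
          rw [Nat.choose_eq_zero_of_lt (by omega), mul_zero]
        have hbin : ∑ j ∈ range 11, 9 ^ (10 - j) * Nat.choose 10 j = 10 ^ 10 := by decide
        omega

lemma key_base (d : ℕ) (hd : 1 ≤ d) :
    81 * ((10 * d).choose d) ^ 2 < 64 * 1024 ^ d := by
  induction d with
  | zero => omega
  | succ d ih =>
    rcases Nat.eq_zero_or_pos d with h0 | h1
    · subst h0; norm_num [Nat.choose]
    · have ihd := ih h1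
      have hr := ratio_lemma d
      have hr2 : (9^9)^2 * (81 * ((10*(d+1)).choose (d+1))^2)
          ≤ (10^10)^2 * (81 * ((10*d).choose d)^2) := by
        have := Nat.mul_le_mul hr hr
        calc (9^9)^2 * (81 * ((10*(d+1)).choose (d+1))^2)
            = 81 * ((9^9 * (10*(d+1)).choose (d+1)) * (9^9 * (10*(d+1)).choose (d+1))) := by ring
          _ ≤ 81 * ((10^10 * (10*d).choose d) * (10^10 * (10*d).choose d)) :=
              Nat.mul_le_mul_left _ this
          _ = (10^10)^2 * (81 * ((10*d).choose d)^2) := by ring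
      have h3 : (10^10:ℕ)^2 * (81 * ((10*d).choose d)^2) < (10^10)^2 * (64 * 1024^d) :=
        (Nat.mul_lt_mul_left (by norm_num)).2 ihd
      have h4 : (10^10:ℕ)^2 * (64 * 1024^d) ≤ (9^9)^2 * (64 * 1024^(d+1)) := by
        have : (10:ℕ)^20 ≤ (9^9)^2 * 1024 := by norm_num
        calc (10^10:ℕ)^2 * (64 * 1024^d) = (10^20) * 64 * 1024^d := by ring
          _ ≤ ((9^9)^2 * 1024) * 64 * 1024^d := by
              exact Nat.mul_le_mul_right _ (Nat.mul_le_mul_right _ this)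
          _ = (9^9)^2 * (64 * 1024^(d+1)) := by ring
      have : (9^9:ℕ)^2 * (81 * ((10*(d+1)).choose (d+1))^2) < (9^9)^2 * (64 * 1024^(d+1)) := by
        omega
      exact Nat.lt_of_mul_lt_mul_left this



lemma phiF_succ (d n : ℕ) : phiF (d+1) (n+1) = phiF (d+1) n + phiF d n := by
  induction d with
  | zero => simp [phiF, Finset.sum_range_succ]; ring
  | succ d ih =>
    have h : phiF (d+2) (n+1) = phiF (d+1) (n+1) + (n+1).choose (d+2) := by
      simp [phiF, Finset.sum_range_succ]
    rw [h, ih, Nat.choose_succ_succ]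
    simp [phiF, Finset.sum_range_succ]
    ring

lemma eight_phiF_le {d n : ℕ} (hn : 10 * d ≤ n) :
    ∀ k ≤ d, 8 * phiF k n ≤ 9 * n.choose k := by
  intro k hk
  induction k with
  | zero => simp [phiF]
  | succ k ih =>
    have h1 : 8 * phiF k n ≤ 9 * n.choose k := ih (by omega)
    have h2 : 9 * n.choose k ≤ n.choose (k+1) := nine_mul_choose_le hn (by omega)
    have : phiF (k+1) n = phiF k n + n.choose (k+1) := by simp [phiF, Finset.sum_range_succ]
    omega

lemma choose_le_phiF (d n : ℕ) : n.choose d ≤ phiF d n :=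
  Finset.single_le_sum (f := fun i => n.choose i) (fun _ _ => Nat.zero_le _)
    (Finset.self_mem_range_succ d)

lemma phiF_sq_lt {d n : ℕ} (hd : 1 ≤ d) (hn : 10 * d ≤ n) :
    (phiF d n) ^ 2 < 2 ^ n := by
  induction n, hn using Nat.le_induction with
  | base =>
    have h8 : 8 * phiF d (10*d) ≤ 9 * (10*d).choose d := eight_phiF_le le_rfl d le_rfl
    have hb := key_base d hd
    have h64 : 64 * (phiF d (10*d))^2 ≤ 81 * ((10*d).choose d)^2 := by
      calc 64 * (phiF d (10*d))^2 = (8 * phiF d (10*d)) * (8 * phiF d (10*d)) := by ring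
        _ ≤ (9 * (10*d).choose d) * (9 * (10*d).choose d) := Nat.mul_le_mul h8 h8
        _ = 81 * ((10*d).choose d)^2 := by ring
    have h2 : (2:ℕ) ^ (10*d) = 1024 ^ d := by
      rw [show (1024:ℕ) = 2^10 by norm_num, ← pow_mul]
    omega
  | succ n hn ihn =>
    have hrec : phiF d (n+1) = phiF d n + phiF (d-1) n := by
      have := phiF_succ (d-1) n
      rwa [show d - 1 + 1 = d by omega] at this
    have h8 : 8 * phiF (d-1) n ≤ 9 * n.choose (d-1) := by
      apply eight_phiF_le hn; omega
    have h9 : 9 * n.choose (d-1) ≤ n.choose d := by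
      have := nine_mul_choose_le (n := n) (d := d) hn (k := d-1) (by omega)
      rwa [show d - 1 + 1 = d by omega] at this
    have hc : n.choose d ≤ phiF d n := choose_le_phiF d n
    have hstep : 8 * phiF d (n+1) ≤ 9 * phiF d n := by omega
    have hsq : 64 * (phiF d (n+1))^2 ≤ 81 * (phiF d n)^2 := by
      calc 64 * (phiF d (n+1))^2 = (8 * phiF d (n+1)) * (8 * phiF d (n+1)) := by ring
        _ ≤ (9 * phiF d n) * (9 * phiF d n) := Nat.mul_le_mul hstep hstep
        _ = 81 * (phiF d n)^2 := by ring
    have h2 : (2:ℕ)^(n+1) = 2 * 2^n := by ring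
    omega

lemma indicator_one_eq_one_iff {Ω : Type*} (A : Set Ω) (x : Ω) :
    A.indicator (fun _ => (1:ℝ)) x = 1 ↔ x ∈ A := by
  by_cases hx : x ∈ A <;> simp [Set.indicator_apply, hx]

lemma card_powerset_filter_le {α : Type*} [DecidableEq α] (S : Finset α) (d : ℕ) :
    (S.powerset.filter (fun t => t.card ≤ d)).card = phiF d S.card := by
  have heq : S.powerset.filter (fun t => t.card ≤ d)
      = (Finset.range (d+1)).biUnion (fun i => S.powersetCard i) := by
    ext t
    simp only [Finset.mem_filter, Finset.mem_powerset, Finset.mem_biUnion, Finset.mem_range,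
      Finset.mem_powersetCard, Nat.lt_succ_iff]
    constructor
    · rintro ⟨h1, h2⟩; exact ⟨t.card, h2, h1, rfl⟩
    · rintro ⟨i, hi, h1, rfl⟩; exact ⟨h1, hi⟩
  rw [heq, Finset.card_biUnion, phiF]
  · exact Finset.sum_congr rfl fun i _ => S.card_powersetCard i
  · intro i _ j _ hij
    simp only [Finset.disjoint_left, Finset.mem_powersetCard]
    rintro t ⟨_, rfl⟩ ⟨_, h⟩
    exact hij h

end Stmt7Aux

open Stmt7Aux

/-- Lemma `VC-union`: if the class of indicators of a family `𝓓` of sets has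
VC dimension `d ≥ 1`, then the class of indicators of unions of two members of `𝓓` has VC
dimension `< 10 d`. -/
theorem stmt7 {Ω : Type*} (𝓓 : Set (Set Ω)) (d : ℕ) (hd : 1 ≤ d)
    (h : vcDim ((fun D : Set Ω => D.indicator (fun _ => (1 : ℝ))) '' 𝓓) = (d : ℕ∞)) :
    vcDim (Set.image2 (fun D D' : Set Ω => (D ∪ D').indicator (fun _ => (1 : ℝ))) 𝓓 𝓓) <
      ((10 * d : ℕ) : ℕ∞) := by
  classical
  set F : Set (Ω → ℝ) := (fun D : Set Ω => D.indicator (fun _ => (1 : ℝ))) '' 𝓓 with hF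
  set G : Set (Ω → ℝ) :=
    Set.image2 (fun D D' : Set Ω => (D ∪ D').indicator (fun _ => (1 : ℝ))) 𝓓 𝓓 with hG
  -- F shatters no set of size > d
  have hnos : ∀ B : Finset Ω, ShattersF F B → B.card ≤ d := by
    intro B hB
    have hle : (B.card : ℕ∞) ≤ vcDim F := by
      exact le_iSup₂ (f := fun (S : Finset Ω) (_ : ShattersF F S) => (S.card : ℕ∞)) B hB
    rw [h] at hle
    exact_mod_cast hle
  have key : ∀ S : Finset Ω, ShattersF G S → S.card ≤ 10 * d - 1 := by
    intro S hS
    by_contra hcon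
    have hn : 10 * d ≤ S.card := by omega
    -- the trace family of 𝓓 on S
    set 𝒜 : Finset (Finset Ω) :=
      S.powerset.filter (fun T => ∃ D ∈ 𝓓, S.filter (· ∈ D) = T) with h𝒜
    have htr : ∀ D ∈ 𝓓, S.filter (· ∈ D) ∈ 𝒜 := by
      intro D hD
      simp only [h𝒜, Finset.mem_filter, Finset.mem_powerset]
      exact ⟨Finset.filter_subset _ _, D, hD, rfl⟩
    -- every set shattered by 𝒜 is ⊆ S and is F-shattered, hence has card ≤ d
    have hshat : 𝒜.shatterer ⊆ S.powerset.filter (fun t => t.card ≤ d) := by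
      intro t ht
      have hts : 𝒜.Shatters t := Finset.mem_shatterer.1 ht
      have htS : t ⊆ S := by
        obtain ⟨u, hu, htu⟩ := hts.exists_superset
        have : u ⊆ S := by
          have := (Finset.mem_filter.1 hu).1
          exact Finset.mem_powerset.1 this
        exact htu.trans this
      have hFt : ShattersF F t := by
        intro T hT
        obtain ⟨u, hu, htu⟩ := hts hT
        obtain ⟨D, hD, hDu⟩ := (Finset.mem_filter.1 hu).2
        refine ⟨D.indicator (fun _ => (1:ℝ)), ⟨D, hD, rfl⟩, ?_⟩
        intro x hx
        rw [indicator_one_eq_one_iff]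
        have hxS : x ∈ S := htS hx
        constructor
        · intro hxD
          have hxu : x ∈ u := by rw [← hDu]; exact Finset.mem_filter.2 ⟨hxS, hxD⟩
          rw [← htu]; exact Finset.mem_inter.2 ⟨hx, hxu⟩
        · intro hxT
          have : x ∈ t ∩ u := by rw [htu]; exact hxT
          have hxu : x ∈ u := (Finset.mem_inter.1 this).2
          rw [← hDu] at hxu
          exact (Finset.mem_filter.1 hxu).2
      refine Finset.mem_filter.2 ⟨Finset.mem_powerset.2 htS, hnos t hFt⟩
    have hAcard : 𝒜.card ≤ phiF d S.card := by
      calc 𝒜.card ≤ 𝒜.shatterer.card := Finset.card_le_card_shatterer 𝒜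
        _ ≤ (S.powerset.filter (fun t => t.card ≤ d)).card := Finset.card_le_card hshat
        _ = phiF d S.card := card_powerset_filter_le S d
    -- injection from powerset of S into 𝒜 × 𝒜
    set φ : Finset Ω → Finset Ω × Finset Ω := fun T =>
      if hT : ∃ p : Set Ω × Set Ω, p.1 ∈ 𝓓 ∧ p.2 ∈ 𝓓 ∧
          ∀ x ∈ S, ((p.1 ∪ p.2).indicator (fun _ => (1:ℝ)) x = 1 ↔ x ∈ T) then
        (S.filter (· ∈ hT.choose.1), S.filter (· ∈ hT.choose.2))
      else (∅, ∅) with hφ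
    have hex : ∀ T ∈ S.powerset, ∃ p : Set Ω × Set Ω, p.1 ∈ 𝓓 ∧ p.2 ∈ 𝓓 ∧
        ∀ x ∈ S, ((p.1 ∪ p.2).indicator (fun _ => (1:ℝ)) x = 1 ↔ x ∈ T) := by
      intro T hT
      obtain ⟨f, hf, hfT⟩ := hS T (Finset.mem_powerset.1 hT)
      obtain ⟨D, hD, D', hD', hfD⟩ := hf
      exact ⟨(D, D'), hD, hD', by simpa [← hfD] using hfT⟩
    have hrec : ∀ T ∈ S.powerset, (φ T).1 ∪ (φ T).2 = T := by
      intro T hT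
      have hTex := hex T hT
      simp only [hφ, dif_pos hTex]
      obtain ⟨h1, h2, h3⟩ := hTex.choose_spec
      ext x
      simp only [Finset.mem_union, Finset.mem_filter]
      constructor
      · rintro (⟨hxS, hx1⟩ | ⟨hxS, hx2⟩)
        · exact (h3 x hxS).1 ((indicator_one_eq_one_iff _ x).2 (Or.inl hx1))
        · exact (h3 x hxS).1 ((indicator_one_eq_one_iff _ x).2 (Or.inr hx2))
      · intro hxT
        have hxS : x ∈ S := Finset.mem_powerset.1 hT hxT
        have := (indicator_one_eq_one_iff _ x).1 ((h3 x hxS).2 hxT)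
        rcases this with h' | h'
        · exact Or.inl ⟨hxS, h'⟩
        · exact Or.inr ⟨hxS, h'⟩
    have hmaps : ∀ T ∈ S.powerset, φ T ∈ 𝒜 ×ˢ 𝒜 := by
      intro T hT
      have hTex := hex T hT
      simp only [hφ, dif_pos hTex]
      obtain ⟨h1, h2, _⟩ := hTex.choose_spec
      exact Finset.mem_product.2 ⟨htr _ h1, htr _ h2⟩
    have hinj : Set.InjOn φ ↑S.powerset := by
      intro T hT T' hT' hTT'
      have := hrec T hT
      rw [hTT', hrec T' hT'] at this
      exact this.symm
    have hcard : 2 ^ S.card ≤ 𝒜.card * 𝒜.card := by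
      calc 2 ^ S.card = S.powerset.card := (Finset.card_powerset S).symm
        _ ≤ (𝒜 ×ˢ 𝒜).card := Finset.card_le_card_of_injOn φ hmaps hinj
        _ = 𝒜.card * 𝒜.card := Finset.card_product 𝒜 𝒜
    have hphi : (phiF d S.card) ^ 2 < 2 ^ S.card := phiF_sq_lt hd hn
    have : 𝒜.card * 𝒜.card ≤ (phiF d S.card) ^ 2 := by
      calc 𝒜.card * 𝒜.card ≤ phiF d S.card * phiF d S.card := Nat.mul_le_mul hAcard hAcard
        _ = (phiF d S.card) ^ 2 := (sq _).symm
    omega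
  have hle : vcDim G ≤ ((10 * d - 1 : ℕ) : ℕ∞) := by
    refine iSup₂_le ?_
    intro S hS
    exact_mod_cast key S hS
  refine lt_of_le_of_lt hle ?_
  exact_mod_cast Nat.sub_lt (by omega) one_pos
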